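/- Let A = B ⊕ V be a ℤ/2-graded K-algebra with even part B and odd part V. Suppose there exist odd elements φ₁, φ₂ ∈ V and a nonzero scalar c ∈ K such that φ₁φ₂ − φ₂φ₁ = c·1 in A. Then the multiplication-induced map μ : V ⊗_B V → B is injective: every element x ∈ V ⊗_B V with μ(x) = 0 satisfies x = 0. -/

import Mathlib

open scoped TensorProduct

instance grTensorV_subAddCommGroup (K A : Type) [Field K] [Ring A] [Algebra K A]
    (V : Submodule K A) : AddCommGroup V := Submodule.addCommGroup V

/-- The relative tensor product `V ⊗_B V` of the odd part `V` with itself over the even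
part `B`, realized as the quotient of `V ⊗_K V` by the `K`-span of the balancing relators
`(v·b) ⊗ v' - v ⊗ (b·v')` for `b ∈ B`. -/
noncomputable abbrev grTensorV (K A : Type) [Field K] [Ring A] [Algebra K A]
    (B V : Submodule K A) : Type :=
  (TensorProduct K V V) ⧸ (Submodule.span K {x : TensorProduct K V V |
    ∃ (v v' b : A) (hv : v ∈ V) (hv' : v' ∈ V) (_ : b ∈ B) (hvb : v * b ∈ V)
      (hbv' : b * v' ∈ V),
      x = (⟨v * b, hvb⟩ : V) ⊗ₜ[K] (⟨v', hv'⟩ : V)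
            - (⟨v, hv⟩ : V) ⊗ₜ[K] (⟨b * v', hbv'⟩ : V)})

/-- For a `ℤ/2`-graded `K`-algebra `A = B ⊕ V` containing odd elements
`φ₁, φ₂ ∈ V` with `φ₁φ₂ - φ₂φ₁ = c·1` for a nonzero scalar `c`, the multiplication-induced
map `μ : V ⊗_B V → B` is injective: every `x` with `μ(x) = 0` satisfies `x = 0`. -/
theorem stmt_11 (K A : Type) [Field K] [CharZero K] [Ring A] [Algebra K A]
    (B V : Submodule K A) (hcompl : IsCompl B V) (hone : (1 : A) ∈ B)
    (hBB : ∀ b ∈ B, ∀ b' ∈ B, b * b' ∈ B) (hBV : ∀ b ∈ B, ∀ v ∈ V, b * v ∈ V)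
    (hVB : ∀ v ∈ V, ∀ b ∈ B, v * b ∈ V) (hVV : ∀ v ∈ V, ∀ v' ∈ V, v * v' ∈ B)
    (φ₁ φ₂ : A) (hφ₁ : φ₁ ∈ V) (hφ₂ : φ₂ ∈ V) (c : K) (hc : c ≠ 0)
    (hcomm : φ₁ * φ₂ - φ₂ * φ₁ = algebraMap K A c) :
    ∃ μ : grTensorV K A B V →ₗ[K] B,
      (∀ (v v' : A) (hv : v ∈ V) (hv' : v' ∈ V) (h : v * v' ∈ B),
        μ (Submodule.Quotient.mk ((⟨v, hv⟩ : V) ⊗ₜ[K] (⟨v', hv'⟩ : V))) = ⟨v * v', h⟩) ∧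
      Function.Injective μ ∧ (∀ x : grTensorV K A B V, μ x = 0 → x = 0) := by
  classical
  set S : Set (TensorProduct K V V) := {x : TensorProduct K V V |
    ∃ (v v' b : A) (hv : v ∈ V) (hv' : v' ∈ V) (_ : b ∈ B) (hvb : v * b ∈ V)
      (hbv' : b * v' ∈ V),
      x = (⟨v * b, hvb⟩ : V) ⊗ₜ[K] (⟨v', hv'⟩ : V)
            - (⟨v, hv⟩ : V) ⊗ₜ[K] (⟨b * v', hbv'⟩ : V)} with hS
  -- the multiplication bilinear map
  let m : V →ₗ[K] V →ₗ[K] B :=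
    LinearMap.mk₂ K (fun v v' => (⟨v.1 * v'.1, hVV _ v.2 _ v'.2⟩ : B))
      (fun v w v' => Subtype.ext (add_mul _ _ _))
      (fun a v v' => Subtype.ext (smul_mul_assoc a _ _))
      (fun v v' w' => Subtype.ext (mul_add _ _ _))
      (fun a v v' => Subtype.ext (mul_smul_comm a _ _))
  let μ₀ : TensorProduct K V V →ₗ[K] B := TensorProduct.lift m
  have hker : Submodule.span K S ≤ LinearMap.ker μ₀ := by
    rw [Submodule.span_le]
    rintro x ⟨v, v', b, hv, hv', hb, hvb, hbv', rfl⟩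
    simp only [SetLike.mem_coe, LinearMap.mem_ker, map_sub, μ₀, TensorProduct.lift.tmul]
    refine sub_eq_zero.2 (Subtype.ext ?_)
    exact mul_assoc v b v'
  let μ : grTensorV K A B V →ₗ[K] B := Submodule.liftQ _ μ₀ hker
  have hμ : ∀ (v v' : A) (hv : v ∈ V) (hv' : v' ∈ V) (h : v * v' ∈ B),
      μ (Submodule.Quotient.mk ((⟨v, hv⟩ : V) ⊗ₜ[K] (⟨v', hv'⟩ : V))) = ⟨v * v', h⟩ := by
    intro v v' hv hv' h
    rfl
  -- the section σ : B → V ⊗_B V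
  let mkq : TensorProduct K V V →ₗ[K] grTensorV K A B V := (Submodule.span K S).mkQ
  have key : ∀ (v b v' : A) (hv : v ∈ V) (hb : b ∈ B) (hv' : v' ∈ V)
      (hvb : v * b ∈ V) (hbv' : b * v' ∈ V),
      mkq ((⟨v * b, hvb⟩ : V) ⊗ₜ[K] (⟨v', hv'⟩ : V))
        = mkq ((⟨v, hv⟩ : V) ⊗ₜ[K] (⟨b * v', hbv'⟩ : V)) := by
    intro v b v' hv hb hv' hvb hbv'
    rw [← sub_eq_zero, ← map_sub]
    exact (Submodule.Quotient.mk_eq_zero _).2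
      (Submodule.subset_span ⟨v, v', b, hv, hv', hb, hvb, hbv', rfl⟩)
  let f1 : B →ₗ[K] V :=
    { toFun := fun b => ⟨b.1 * φ₁, hBV _ b.2 _ hφ₁⟩
      map_add' := fun a b => Subtype.ext (add_mul _ _ _)
      map_smul' := fun a b => Subtype.ext (smul_mul_assoc a _ _) }
  let f2 : B →ₗ[K] V :=
    { toFun := fun b => ⟨b.1 * φ₂, hBV _ b.2 _ hφ₂⟩
      map_add' := fun a b => Subtype.ext (add_mul _ _ _)
      map_smul' := fun a b => Subtype.ext (smul_mul_assoc a _ _) }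
  let t1 : V →ₗ[K] TensorProduct K V V := (TensorProduct.mk K V V).flip ⟨φ₁, hφ₁⟩
  let t2 : V →ₗ[K] TensorProduct K V V := (TensorProduct.mk K V V).flip ⟨φ₂, hφ₂⟩
  let σ : B →ₗ[K] grTensorV K A B V :=
    c⁻¹ • (mkq ∘ₗ t2 ∘ₗ f1 - mkq ∘ₗ t1 ∘ₗ f2)
  have hσμ : ∀ x : grTensorV K A B V, σ (μ x) = x := by
    intro x
    obtain ⟨y, rfl⟩ := Submodule.Quotient.mk_surjective _ x
    induction y using TensorProduct.induction_on with
    | zero => simp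
    | add a b ha hb =>
        have : (Submodule.Quotient.mk (a + b) : grTensorV K A B V)
            = Submodule.Quotient.mk a + Submodule.Quotient.mk b :=
          Submodule.Quotient.mk_add _
        rw [this, map_add, map_add, ha, hb]
    | tmul v v' =>
        obtain ⟨v, hv⟩ := v
        obtain ⟨v', hv'⟩ := v'
        have hσval : σ (μ (Submodule.Quotient.mk ((⟨v, hv⟩ : V) ⊗ₜ[K] (⟨v', hv'⟩ : V))))
            = c⁻¹ • (mkq ((⟨(v * v') * φ₁, hBV _ (hVV _ hv _ hv') _ hφ₁⟩ : V) ⊗ₜ[K]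
                  (⟨φ₂, hφ₂⟩ : V))
                - mkq ((⟨(v * v') * φ₂, hBV _ (hVV _ hv _ hv') _ hφ₂⟩ : V) ⊗ₜ[K]
                  (⟨φ₁, hφ₁⟩ : V))) := rfl
        rw [hσval]
        have e1 : (⟨(v * v') * φ₁, hBV _ (hVV _ hv _ hv') _ hφ₁⟩ : V)
            = ⟨v * (v' * φ₁), hVB _ hv _ (hVV _ hv' _ hφ₁)⟩ :=
          Subtype.ext (mul_assoc v v' φ₁)
        have e2 : (⟨(v * v') * φ₂, hBV _ (hVV _ hv _ hv') _ hφ₂⟩ : V)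
            = ⟨v * (v' * φ₂), hVB _ hv _ (hVV _ hv' _ hφ₂)⟩ :=
          Subtype.ext (mul_assoc v v' φ₂)
        rw [e1, e2,
          key v (v' * φ₁) φ₂ hv (hVV _ hv' _ hφ₁) hφ₂ _ (hBV _ (hVV _ hv' _ hφ₁) _ hφ₂),
          key v (v' * φ₂) φ₁ hv (hVV _ hv' _ hφ₂) hφ₁ _ (hBV _ (hVV _ hv' _ hφ₂) _ hφ₁),
          ← map_sub, ← TensorProduct.tmul_sub]
        have hsub : ((⟨(v' * φ₁) * φ₂, hBV _ (hVV _ hv' _ hφ₁) _ hφ₂⟩ : V)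
            - (⟨(v' * φ₂) * φ₁, hBV _ (hVV _ hv' _ hφ₂) _ hφ₁⟩ : V))
            = c • (⟨v', hv'⟩ : V) := by
          apply Subtype.ext
          show (v' * φ₁) * φ₂ - (v' * φ₂) * φ₁ = c • v'
          rw [mul_assoc, mul_assoc, ← mul_sub, hcomm]
          rw [← Algebra.commutes c v', ← Algebra.smul_def]
        rw [hsub, TensorProduct.tmul_smul, map_smul, smul_smul, inv_mul_cancel₀ hc,
          one_smul]
        rfl
  refine ⟨μ, hμ, Function.LeftInverse.injective hσμ, fun x hx => ?_⟩
  have := hσμ x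
  rw [hx, map_zero] at this
  exact this.symm
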